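/- An abstract spectrum (S, T⁺, T⁻) satisfies T⁺ = T⁻ if and only if both (S, T⁺) and (S, T⁻) are T₁-spaces. -/

import Mathlib

/-- `B` is a base for the topology `t`: every element of `B` is open and every
open set is a union of elements of `B`. -/
def IsBaseFor {S : Type*} (t : TopologicalSpace S) (B : Set (Set S)) : Prop :=
  (∀ V ∈ B, t.IsOpen V) ∧ ∀ U : Set S, t.IsOpen U → ∀ x ∈ U, ∃ V ∈ B, x ∈ V ∧ V ⊆ U

/-- The family `L⁺ = {U ∈ T⁺ : S∖U ∈ T⁻}` (for `specL tp tm`); `specL tm tp` is `L⁻`. -/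
def specL {S : Type*} (tp tm : TopologicalSpace S) : Set (Set S) :=
  {U | tp.IsOpen U ∧ tm.IsOpen Uᶜ}

/-- `(S, T⁺, T⁻)` is an abstract spectrum. -/
structure IsAbstractSpectrum {S : Type*} (tp tm : TopologicalSpace S) : Prop where
  nonempty : Nonempty S
  base_plus : IsBaseFor tp (specL tp tm)
  base_minus : IsBaseFor tm (specL tm tp)
  compact_of_plus_closed : ∀ F : Set S, @IsClosed S tp F → @IsCompact S tm F
  compact_of_minus_closed : ∀ F : Set S, @IsClosed S tm F → @IsCompact S tp F
  t0 : @T0Space S tp ∨ @T0Space S tm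

/-- Swapping the two topologies of an abstract spectrum gives an abstract spectrum. -/
lemma IsAbstractSpectrum.swap {S : Type*} {tp tm : TopologicalSpace S}
    (h : IsAbstractSpectrum tp tm) : IsAbstractSpectrum tm tp :=
  ⟨h.nonempty, h.base_minus, h.base_plus, h.compact_of_minus_closed,
    h.compact_of_plus_closed, h.t0.symm⟩

/-- If `T⁺` is T₁ then every element of `L⁺` is `T⁺`-closed. -/
lemma specL_isClosed {S : Type*} {tp tm : TopologicalSpace S}
    (h : IsAbstractSpectrum tp tm) (h1 : @T1Space S tp) :
    ∀ W ∈ specL tp tm, @IsClosed S tp W := by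
  intro W hW
  rw [← @closure_subset_iff_isClosed S tp W]
  intro x hx
  -- index over basic `T⁺`-neighbourhoods of `x` in `L⁺`
  let ι := {V : Set S // V ∈ specL tp tm ∧ x ∈ V}
  have huniv : (Set.univ : Set S) ∈ specL tp tm :=
    ⟨tp.isOpen_univ, by rw [Set.compl_univ]; exact @isOpen_empty S tm⟩
  have hι : Nonempty ι := ⟨⟨Set.univ, huniv, trivial⟩⟩
  let f : ι → Set S := fun i => i.1 ∩ W
  -- the whole space is `T⁻`-compact
  have hScompact : @CompactSpace S tm :=
    ⟨h.compact_of_plus_closed Set.univ (@isClosed_univ S tp)⟩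
  have hclosed : ∀ i : ι, @IsClosed S tm (f i) := by
    intro i
    have h1 : @IsClosed S tm i.1 := by
      rw [← @isOpen_compl_iff S _ tm]; exact i.2.1.2
    have h2 : @IsClosed S tm W := by
      rw [← @isOpen_compl_iff S _ tm]; exact hW.2
    exact @IsClosed.inter S _ _ tm h1 h2
  have hcompact : ∀ i : ι, @IsCompact S tm (f i) :=
    fun i => @IsClosed.isCompact S tm (f i) hScompact (hclosed i)
  have hnonempty : ∀ i : ι, (f i).Nonempty := by
    intro i
    have := (@mem_closure_iff S tp _ _).1 hx i.1 i.2.1.1 i.2.2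
    exact this
  have hdir : Directed (· ⊇ ·) f := by
    intro i j
    have hmem : i.1 ∩ j.1 ∈ specL tp tm := by
      refine ⟨tp.isOpen_inter _ _ i.2.1.1 j.2.1.1, ?_⟩
      rw [Set.compl_inter]
      exact @IsOpen.union S _ _ tm i.2.1.2 j.2.1.2
    refine ⟨⟨i.1 ∩ j.1, hmem, ⟨i.2.2, j.2.2⟩⟩, ?_, ?_⟩
    · exact Set.inter_subset_inter_left _ Set.inter_subset_left
    · exact Set.inter_subset_inter_left _ Set.inter_subset_right
  obtain ⟨z, hz⟩ :=
    @IsCompact.nonempty_iInter_of_directed_nonempty_isCompact_isClosed S tm ι hι f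
      hdir hnonempty hcompact hclosed
  have hzW : z ∈ W := (Set.mem_iInter.1 hz ⟨Set.univ, huniv, trivial⟩).2
  -- `x` is in the `T⁺`-closure of `{z}`, so `x = z` by T₁
  have hxz : x ∈ @closure S tp {z} := by
    rw [@mem_closure_iff S tp _ _]
    intro U hU hxU
    obtain ⟨V, hV, hxV, hVU⟩ := h.base_plus.2 U hU x hxU
    have : z ∈ V := (Set.mem_iInter.1 hz ⟨V, hV, hxV⟩).1
    exact ⟨z, hVU this, rfl⟩
  rw [@closure_singleton S tp h1 z] at hxz
  rw [hxz]
  exact hzW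

/-- If `T⁺` is T₁ then every `T⁻`-open set is `T⁺`-open. -/
lemma isOpen_of_t1 {S : Type*} {tp tm : TopologicalSpace S}
    (h : IsAbstractSpectrum tp tm) (h1 : @T1Space S tp) :
    ∀ U : Set S, tm.IsOpen U → tp.IsOpen U := by
  intro U hU
  letI := tp
  show IsOpen U
  rw [isOpen_iff_forall_mem_open]
  intro x hx
  obtain ⟨V, hV, hxV, hVU⟩ := h.base_minus.2 U hU x hx
  have hVc : Vᶜ ∈ specL tp tm := ⟨hV.2, by simpa using hV.1⟩
  have : @IsClosed S tp Vᶜ := specL_isClosed h h1 Vᶜ hVc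
  refine ⟨V, hVU, ?_, hxV⟩
  have := this.isOpen_compl
  simpa using this

/-- If the two topologies of an abstract spectrum coincide, the topology is T₁. -/
lemma t1_of_eq {S : Type*} {t : TopologicalSpace S}
    (h : IsAbstractSpectrum t t) : @T1Space S t := by
  letI := t
  have ht0 : T0Space S := h.t0.elim id id
  rw [t1Space_iff_exists_open]
  intro x y hxy
  have : ¬Inseparable x y := fun hin => hxy (hin.eq)
  rw [inseparable_iff_forall_isOpen] at this
  push_neg at this
  obtain ⟨U, hU, hUxy⟩ := this
  rcases hUxy with ⟨hxU, hyU⟩ | ⟨hxU, hyU⟩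
  · obtain ⟨V, hV, hxV, hVU⟩ := h.base_plus.2 U hU x hxU
    exact ⟨V, hV.1, hxV, fun hyV => hyU (hVU hyV)⟩
  · obtain ⟨V, hV, hyV, hVU⟩ := h.base_plus.2 U hU y hyU
    exact ⟨Vᶜ, hV.2, fun hxV => hxU (hVU hxV), by simp [hyV]⟩

/-- An abstract spectrum `(S, T⁺, T⁻)` satisfies `T⁺ = T⁻` iff both `(S, T⁺)` and
`(S, T⁻)` are T₁-spaces. -/
theorem stmt4 {S : Type*} (tp tm : TopologicalSpace S)
    (h : IsAbstractSpectrum tp tm) :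
    tp = tm ↔ (@T1Space S tp ∧ @T1Space S tm) := by
  constructor
  · rintro rfl
    exact ⟨t1_of_eq h, t1_of_eq h⟩
  · rintro ⟨h1, h2⟩
    refine TopologicalSpace.ext_iff.mpr fun U => ⟨?_, ?_⟩
    · exact fun hU => isOpen_of_t1 h.swap h2 U hU
    · exact fun hU => isOpen_of_t1 h h1 U hU
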